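/- Let 1/2 < η < 1, let Ṽ_η be the normalised Wolbachia operator, and let s = (x₁⁽⁰⁾,x₂⁽⁰⁾,x₃⁽⁰⁾,u⁽⁰⁾) ∈ S^{3,1}. Write (x₁⁽ᵏ⁾,x₂⁽ᵏ⁾,x₃⁽ᵏ⁾,u⁽ᵏ⁾) = Ṽ_η^k(s) for the trajectory (which stays in S^{3,1}). Then: (i) 1/2 ≤ x₁⁽ᵏ⁾ + x₂⁽ᵏ⁾ ≤ η for all k ≥ 1; (ii) x₃⁽ᵏ⁾ ≤ η and x₃⁽ᵏ⁺¹⁾ ≤ x₃⁽ᵏ⁾ for all k ≥ 1; (iii) there exists n₀ ∈ ℕ such that x₂⁽ᵏ⁾ + (1+η) x₃⁽ᵏ⁾ ≤ 2η (x₂⁽ᵏ⁾ + x₃⁽ᵏ⁾) for all k ≥ n₀; (iv) there exists m₀ ∈ ℕ such that x₁⁽ᵏ⁺¹⁾ ≥ x₁⁽ᵏ⁾ for all k ≥ m₀. -/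

import Mathlib

/-- The normalised Wolbachia gonosomal operator with parameter `η`
(defined for points whose first three coordinates have positive sum). -/
noncomputable def nWolbOp (η : ℝ) (p : ℝ × ℝ × ℝ × ℝ) : ℝ × ℝ × ℝ × ℝ :=
  (η * (2 * p.1 + p.2.2.1) / (2 * (p.1 + p.2.1 + p.2.2.1)),
   (p.2.1 + (1 - η) * p.2.2.1) / (2 * (p.1 + p.2.1 + p.2.2.1)),
   η * p.2.2.1 / (2 * (p.1 + p.2.1 + p.2.2.1)),
   ((1 - η) * (2 * p.1 + p.2.2.1) + p.2.1) / (2 * (p.1 + p.2.1 + p.2.2.1)))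

/-- The set `S^{3,1}` of frequency distributions. -/
def S31 : Set (ℝ × ℝ × ℝ × ℝ) :=
  {p | 0 ≤ p.1 ∧ 0 ≤ p.2.1 ∧ 0 ≤ p.2.2.1 ∧ 0 ≤ p.2.2.2 ∧
       0 < p.1 + p.2.1 + p.2.2.1 ∧ 0 < p.2.2.2 ∧
       p.1 + p.2.1 + p.2.2.1 + p.2.2.2 = 1}

lemma wolb_step_mem {η : ℝ} (h1 : 1 / 2 < η) (h2 : η < 1) {p : ℝ × ℝ × ℝ × ℝ}
    (hp : p ∈ S31) : nWolbOp η p ∈ S31 := by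
  obtain ⟨a, b, c, d⟩ := p
  obtain ⟨ha, hb, hc, hd, hα, hd', hsum⟩ := hp
  simp only at ha hb hc hd hα hd' hsum
  have hT : (0:ℝ) < 2 * (a + b + c) := by linarith
  refine ⟨?_, ?_, ?_, ?_, ?_, ?_, ?_⟩ <;> simp only [nWolbOp]
  · positivity
  · have : 0 ≤ b + (1 - η) * c := by nlinarith
    positivity
  · positivity
  · have : 0 ≤ (1 - η) * (2 * a + c) + b := by nlinarith
    positivity
  · rw [← add_div, ← add_div, lt_div_iff₀ hT]
    nlinarith
  · rw [lt_div_iff₀ hT]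
    nlinarith
  · field_simp
    ring

lemma wolb_step_sum12 {η : ℝ} (h1 : 1 / 2 < η) (h2 : η < 1) {p : ℝ × ℝ × ℝ × ℝ}
    (hp : p ∈ S31) :
    1 / 2 ≤ (nWolbOp η p).1 + (nWolbOp η p).2.1 ∧ (nWolbOp η p).1 + (nWolbOp η p).2.1 ≤ η := by
  obtain ⟨a, b, c, d⟩ := p
  obtain ⟨ha, hb, hc, hd, hα, hd', hsum⟩ := hp
  simp only at ha hb hc hα
  have hT : (0:ℝ) < 2 * (a + b + c) := by linarith
  simp only [nWolbOp]
  rw [← add_div, le_div_iff₀ hT, div_le_iff₀ hT]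
  constructor <;> nlinarith

lemma wolb_step_x3_le {η : ℝ} (h1 : 1 / 2 < η) (h2 : η < 1) {p : ℝ × ℝ × ℝ × ℝ}
    (hp : p ∈ S31) : (nWolbOp η p).2.2.1 ≤ η := by
  obtain ⟨a, b, c, d⟩ := p
  obtain ⟨ha, hb, hc, hd, hα, hd', hsum⟩ := hp
  simp only at ha hb hc hα
  have hT : (0:ℝ) < 2 * (a + b + c) := by linarith
  simp only [nWolbOp]
  rw [div_le_iff₀ hT]
  nlinarith

lemma wolb_step_x3_mono {η : ℝ} (h1 : 1 / 2 < η) (h2 : η < 1) {p : ℝ × ℝ × ℝ × ℝ}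
    (hp : p ∈ S31) (hhalf : 1 / 2 ≤ p.1 + p.2.1) :
    (nWolbOp η p).2.2.1 ≤ p.2.2.1 := by
  obtain ⟨a, b, c, d⟩ := p
  obtain ⟨ha, hb, hc, hd, hα, hd', hsum⟩ := hp
  simp only at ha hb hc hα hhalf
  have hT : (0:ℝ) < 2 * (a + b + c) := by linarith
  simp only [nWolbOp]
  rw [div_le_iff₀ hT]
  nlinarith

lemma wolb_step_ratio {η : ℝ} (h1 : 1 / 2 < η) (h2 : η < 1) {p : ℝ × ℝ × ℝ × ℝ}
    (hp : p ∈ S31) (C : ℝ) (hr : C * p.2.2.1 ≤ p.2.1) :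
    ((C + 1 - η) / η) * (nWolbOp η p).2.2.1 ≤ (nWolbOp η p).2.1 := by
  obtain ⟨a, b, c, d⟩ := p
  obtain ⟨ha, hb, hc, hd, hα, hd', hsum⟩ := hp
  simp only at ha hb hc hα hr
  have hT : (0:ℝ) < 2 * (a + b + c) := by linarith
  have hη : (0:ℝ) < η := by linarith
  simp only [nWolbOp]
  have key : ((C + 1 - η) / η) * (η * c / (2 * (a + b + c)))
      = ((C + 1 - η) * c) / (2 * (a + b + c)) := by
    field_simp
  rw [key, div_le_div_iff_of_pos_right hT]
  linarith

lemma wolb_step_alpha_le {η : ℝ} (h1 : 1 / 2 < η) (h2 : η < 1) {p : ℝ × ℝ × ℝ × ℝ}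
    (hp : p ∈ S31) (hQ : (1 - η) * p.2.2.1 ≤ (2 * η - 1) * p.2.1) :
    (nWolbOp η p).1 + (nWolbOp η p).2.1 + (nWolbOp η p).2.2.1 ≤ η := by
  obtain ⟨a, b, c, d⟩ := p
  obtain ⟨ha, hb, hc, hd, hα, hd', hsum⟩ := hp
  simp only at ha hb hc hα hQ
  have hT : (0:ℝ) < 2 * (a + b + c) := by linarith
  simp only [nWolbOp]
  rw [← add_div, ← add_div, div_le_iff₀ hT]
  nlinarith

lemma wolb_step_x1_mono {η : ℝ} (h1 : 1 / 2 < η) (h2 : η < 1) {p : ℝ × ℝ × ℝ × ℝ}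
    (hp : p ∈ S31) (halpha : p.1 + p.2.1 + p.2.2.1 ≤ η) :
    p.1 ≤ (nWolbOp η p).1 := by
  obtain ⟨a, b, c, d⟩ := p
  obtain ⟨ha, hb, hc, hd, hα, hd', hsum⟩ := hp
  simp only at ha hb hc hα halpha
  have hT : (0:ℝ) < 2 * (a + b + c) := by linarith
  simp only [nWolbOp]
  rw [le_div_iff₀ hT]
  nlinarith

theorem nWolbOp_trajectory_inequalities (η : ℝ) (h1 : 1 / 2 < η) (h2 : η < 1)
    (s : ℝ × ℝ × ℝ × ℝ) (hs : s ∈ S31) :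
    (∀ k : ℕ, 1 ≤ k →
        1 / 2 ≤ ((nWolbOp η)^[k] s).1 + ((nWolbOp η)^[k] s).2.1 ∧
        ((nWolbOp η)^[k] s).1 + ((nWolbOp η)^[k] s).2.1 ≤ η) ∧
    (∀ k : ℕ, 1 ≤ k →
        ((nWolbOp η)^[k] s).2.2.1 ≤ η ∧
        ((nWolbOp η)^[k + 1] s).2.2.1 ≤ ((nWolbOp η)^[k] s).2.2.1) ∧
    (∃ n0 : ℕ, ∀ k : ℕ, n0 ≤ k →
        ((nWolbOp η)^[k] s).2.1 + (1 + η) * ((nWolbOp η)^[k] s).2.2.1 ≤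
          2 * η * (((nWolbOp η)^[k] s).2.1 + ((nWolbOp η)^[k] s).2.2.1)) ∧
    (∃ m0 : ℕ, ∀ k : ℕ, m0 ≤ k →
        ((nWolbOp η)^[k] s).1 ≤ ((nWolbOp η)^[k + 1] s).1) := by
  have hη : (0:ℝ) < η := by linarith
  have hη1 : (1:ℝ) < 1 / η := by rw [lt_div_iff₀ hη]; linarith
  have hmem : ∀ k, (nWolbOp η)^[k] s ∈ S31 := by
    intro k
    induction k with
    | zero => simpa using hs
    | succ n ih => rw [Function.iterate_succ_apply']; exact wolb_step_mem h1 h2 ih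
  have hsum12 : ∀ k : ℕ, 1 ≤ k →
      1 / 2 ≤ ((nWolbOp η)^[k] s).1 + ((nWolbOp η)^[k] s).2.1 ∧
      ((nWolbOp η)^[k] s).1 + ((nWolbOp η)^[k] s).2.1 ≤ η := by
    intro k hk
    obtain ⟨j, rfl⟩ : ∃ j, k = j + 1 := ⟨k - 1, by omega⟩
    rw [Function.iterate_succ_apply']
    exact wolb_step_sum12 h1 h2 (hmem j)
  -- ratio lemma by induction
  have haux : ∀ j : ℕ, ((1/η)^j - 1) * ((nWolbOp η)^[j+1] s).2.2.1 ≤ ((nWolbOp η)^[j+1] s).2.1 := by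
    intro j
    induction j with
    | zero =>
      rw [pow_zero, sub_self, zero_mul]
      exact (hmem 1).2.1
    | succ n ih =>
      have step := wolb_step_ratio h1 h2 (hmem (n+1)) ((1/η)^n - 1) ih
      have hC : ((1/η)^n - 1 + 1 - η) / η = (1/η)^(n+1) - 1 := by
        rw [pow_succ, sub_add_cancel, sub_div, div_self (ne_of_gt hη), mul_one_div]
      rw [hC] at step
      rw [show n + 1 + 1 = (n+1) + 1 from rfl, Function.iterate_succ_apply']
      exact step
  obtain ⟨n, hn⟩ : ∃ n : ℕ, η / (2*η - 1) < (1/η)^n := pow_unbounded_of_one_lt _ hη1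
  have hQ : ∀ k : ℕ, n + 1 ≤ k →
      (1 - η) * ((nWolbOp η)^[k] s).2.2.1 ≤ (2*η - 1) * ((nWolbOp η)^[k] s).2.1 := by
    intro k hk
    obtain ⟨j, rfl⟩ : ∃ j, k = (j + n) + 1 := ⟨k - n - 1, by omega⟩
    have hC := haux (j + n)
    have hmono : (1/η)^n ≤ (1/η)^(j+n) := pow_le_pow_right₀ (le_of_lt hη1) (by omega)
    have hpow : 1 - η < (2*η - 1) * ((1/η)^(j+n) - 1) := by
      have h3 : η < (1/η)^(j+n) * (2*η - 1) := by
        rw [div_lt_iff₀ (by linarith : (0:ℝ) < 2*η - 1)] at hn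
        nlinarith [mul_le_mul_of_nonneg_right hmono (by linarith : (0:ℝ) ≤ 2*η - 1)]
      nlinarith
    have hx3 : 0 ≤ ((nWolbOp η)^[(j+n)+1] s).2.2.1 := (hmem _).2.2.1
    nlinarith [mul_le_mul_of_nonneg_left hC (by linarith : (0:ℝ) ≤ 2*η - 1),
      mul_le_mul_of_nonneg_right (le_of_lt hpow) hx3]
  refine ⟨hsum12, ?_, ?_, ?_⟩
  · intro k hk
    constructor
    · obtain ⟨j, rfl⟩ : ∃ j, k = j + 1 := ⟨k - 1, by omega⟩
      rw [Function.iterate_succ_apply']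
      exact wolb_step_x3_le h1 h2 (hmem j)
    · rw [Function.iterate_succ_apply' (n := k)]
      exact wolb_step_x3_mono h1 h2 (hmem k) (hsum12 k hk).1
  · exact ⟨n + 1, fun k hk => by have := hQ k hk; linarith⟩
  · refine ⟨n + 2, fun k hk => ?_⟩
    have halpha : ((nWolbOp η)^[k] s).1 + ((nWolbOp η)^[k] s).2.1 + ((nWolbOp η)^[k] s).2.2.1 ≤ η := by
      obtain ⟨j, rfl⟩ : ∃ j, k = j + 1 := ⟨k - 1, by omega⟩
      rw [Function.iterate_succ_apply']
      exact wolb_step_alpha_le h1 h2 (hmem j) (hQ j (by omega))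
    rw [Function.iterate_succ_apply' (n := k)]
    exact wolb_step_x1_mono h1 h2 (hmem k) halpha
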